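/- Let G be a group and N a normal subgroup of finite index. The inclusion N → G induces a ℚ-linear map φ : ℚ ⊗_ℤ N_ab → ℚ ⊗_ℤ G_ab between the rationalized abelianizations. Then φ is surjective, and its kernel is the ℚ-submodule generated by the elements 1 ⊗ ([n] − [gng⁻¹]) for g ∈ G and n ∈ N; that is, φ induces an isomorphism from the G-coinvariants of ℚ ⊗_ℤ N_ab onto ℚ ⊗_ℤ G_ab. -/

import Mathlib

set_option maxHeartbeats 1000000

open scoped TensorProduct

open MulAction Subgroup MonoidHom in
lemma transfer_coe_eq_pow_index {G : Type*} [Group G] (H : Subgroup G) [H.FiniteIndex]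
    {A : Type*} [CommGroup A] (ϕ : H →* A)
    (hconj : ∀ (g₀ : G) (n : H) (hm : g₀⁻¹ * ↑n * g₀ ∈ H), ϕ ⟨g₀⁻¹ * ↑n * g₀, hm⟩ = ϕ n)
    (n : H) : MonoidHom.transfer ϕ (n : G) = ϕ n ^ H.index := by
  classical
  letI := H.fintypeQuotientOfFiniteIndex
  rw [transfer_eq_prod_quotient_orbitRel_zpowers_quot]
  have key : ∀ q : Quotient (orbitRel (zpowers (n : G)) (G ⧸ H)),
      ϕ ⟨q.out.out⁻¹ * (n : G) ^ Function.minimalPeriod ((n : G) • ·) q.out * q.out.out,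
          QuotientGroup.out_conj_pow_minimalPeriod_mem H (n : G) q.out⟩
        = ϕ n ^ Function.minimalPeriod ((n : G) • ·) q.out := by
    intro q
    set k := Function.minimalPeriod ((n : G) • ·) q.out with hk
    have hmem : q.out.out⁻¹ * ↑(n ^ k) * q.out.out ∈ H := by
      simpa using QuotientGroup.out_conj_pow_minimalPeriod_mem H (n : G) q.out
    have h1 : (⟨q.out.out⁻¹ * (n : G) ^ k * q.out.out,
        QuotientGroup.out_conj_pow_minimalPeriod_mem H (n : G) q.out⟩ : H)
        = ⟨q.out.out⁻¹ * ↑(n ^ k) * q.out.out, hmem⟩ := by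
      ext; simp
    rw [h1, hconj q.out.out (n ^ k) hmem, map_pow]
  rw [Fintype.prod_congr _ _ key, Finset.prod_pow_eq_pow_sum]
  congr 1
  have hcard : ∀ q : Quotient (orbitRel (zpowers (n : G)) (G ⧸ H)),
      Function.minimalPeriod ((n : G) • ·) q.out
        = Fintype.card (orbit (zpowers (n : G)) q.out) := fun q =>
    minimalPeriod_eq_card (n : G) q.out
  rw [Finset.sum_congr rfl fun q _ => hcard q, ← Fintype.card_sigma,
    ← Fintype.card_congr (selfEquivSigmaOrbits (zpowers (n : G)) (G ⧸ H)),
    index_eq_card, Nat.card_eq_fintype_card]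

theorem stmt14 {G : Type*} [Group G] (N : Subgroup G) (hN : N.Normal)
    (hfin : N.FiniteIndex) :
    Function.Surjective
      ((MonoidHom.toAdditive (Abelianization.map N.subtype)).toIntLinearMap.baseChange ℚ) ∧
    LinearMap.ker
        ((MonoidHom.toAdditive (Abelianization.map N.subtype)).toIntLinearMap.baseChange ℚ)
      = Submodule.span ℚ
          {x : ℚ ⊗[ℤ] Additive (Abelianization N) |
            ∃ (g : G) (n : N), x = (1 : ℚ) ⊗ₜ[ℤ]
              (Additive.ofMul (Abelianization.of n) -
               Additive.ofMul (Abelianization.of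
                 (⟨g * (n : G) * g⁻¹, hN.conj_mem (n : G) n.2 g⟩ : N)))} := by
  classical
  haveI := hN
  haveI := hfin
  set φ := (MonoidHom.toAdditive (Abelianization.map N.subtype)).toIntLinearMap.baseChange ℚ
    with hφ
  set S : Set (ℚ ⊗[ℤ] Additive (Abelianization N)) :=
    {x | ∃ (g : G) (n : N), x = (1 : ℚ) ⊗ₜ[ℤ]
          (Additive.ofMul (Abelianization.of n) -
           Additive.ofMul (Abelianization.of
             (⟨g * (n : G) * g⁻¹, hN.conj_mem (n : G) n.2 g⟩ : N)))} with hS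
  set K : Submodule ℚ (ℚ ⊗[ℤ] Additive (Abelianization N)) := Submodule.span ℚ S with hK
  have hm0 : (N.index : ℚ) ≠ 0 := by exact_mod_cast hfin.index_ne_zero
  have hφtmul : ∀ (q : ℚ) (n : N),
      φ (q ⊗ₜ[ℤ] Additive.ofMul (Abelianization.of n))
        = q ⊗ₜ[ℤ] Additive.ofMul (Abelianization.of (n : G)) := by
    intro q n
    rw [hφ, LinearMap.baseChange_tmul]
    congr 1
  constructor
  · -- Surjectivity
    intro w
    have htop : (⊤ : Submodule ℚ (ℚ ⊗[ℤ] Additive (Abelianization G))) ≤ LinearMap.range φ := by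
      intro v _
      induction v using TensorProduct.induction_on with
      | zero => exact Submodule.zero_mem _
      | add x y hx hy => exact Submodule.add_mem _ (hx trivial) (hy trivial)
      | tmul q a =>
        obtain ⟨g, rfl⟩ : ∃ g : G, Additive.ofMul (Abelianization.of g) = a := by
          obtain ⟨g, hg⟩ := QuotientGroup.mk_surjective (Additive.toMul a)
          exact ⟨g, by rw [show Abelianization.of g = Additive.toMul a from hg]; rfl⟩
        set H : Subgroup G := N ⊔ commutator G with hH
        haveI : H.Normal := Subgroup.sup_normal N (commutator G)
        have hind : H.index ≠ 0 := fun h =>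
          hfin.index_ne_zero (Nat.eq_zero_of_zero_dvd (h ▸ Subgroup.index_dvd_of_le le_sup_left))
        set m := H.index with hm
        have hpow : g ^ m ∈ (↑H : Set G) := Subgroup.pow_index_mem H g
        rw [hH, Subgroup.mul_normal N (commutator G)] at hpow
        obtain ⟨n, hn, c, hc, hnc⟩ := hpow
        have hofc : Abelianization.of c = 1 :=
          Abelianization.commutator_subset_ker (Abelianization.of) hc
        have hnc' : n * c = g ^ m := hnc
        have hof : Abelianization.of n = Abelianization.of g ^ m := by
          rw [← map_pow, ← hnc', map_mul, hofc, mul_one]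
        refine ⟨(q / m) ⊗ₜ[ℤ] Additive.ofMul (Abelianization.of (⟨n, hn⟩ : N)), ?_⟩
        rw [hφtmul]
        show (q / m) ⊗ₜ[ℤ] Additive.ofMul (Abelianization.of n) = _
        rw [hof]
        have hsm : Additive.ofMul (Abelianization.of g ^ m)
            = (m : ℤ) • Additive.ofMul (Abelianization.of g) := by
          rw [ofMul_pow, natCast_zsmul]
        rw [hsm, TensorProduct.tmul_smul, TensorProduct.smul_tmul', zsmul_eq_mul]
        congr 1
        have : (m : ℚ) ≠ 0 := Nat.cast_ne_zero.mpr hind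
        push_cast
        field_simp
    exact htop trivial
  · -- Kernel
    set π := K.mkQ with hπ
    have hπconj : ∀ (g₀ : G) (n : N) (hm : g₀⁻¹ * ↑n * g₀ ∈ N),
        π ((1:ℚ) ⊗ₜ[ℤ] Additive.ofMul (Abelianization.of (⟨g₀⁻¹ * ↑n * g₀, hm⟩ : N)))
          = π ((1:ℚ) ⊗ₜ[ℤ] Additive.ofMul (Abelianization.of n)) := by
      intro g₀ n hm
      have hsub : (⟨g₀⁻¹ * (n : G) * g₀⁻¹⁻¹, hN.conj_mem (n : G) n.2 g₀⁻¹⟩ : N)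
          = ⟨g₀⁻¹ * ↑n * g₀, hm⟩ := by
        ext; simp
      have hgen : (1:ℚ) ⊗ₜ[ℤ] (Additive.ofMul (Abelianization.of n)
          - Additive.ofMul (Abelianization.of
              (⟨g₀⁻¹ * (n : G) * g₀⁻¹⁻¹, hN.conj_mem (n : G) n.2 g₀⁻¹⟩ : N))) ∈ K :=
        Submodule.subset_span ⟨g₀⁻¹, n, rfl⟩
      have h0 : π ((1:ℚ) ⊗ₜ[ℤ] (Additive.ofMul (Abelianization.of n)
          - Additive.ofMul (Abelianization.of
              (⟨g₀⁻¹ * (n : G) * g₀⁻¹⁻¹, hN.conj_mem (n : G) n.2 g₀⁻¹⟩ : N)))) = 0 := by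
        rw [hπ, Submodule.mkQ_apply, Submodule.Quotient.mk_eq_zero]
        exact hgen
      rw [TensorProduct.tmul_sub, map_sub, sub_eq_zero, hsub] at h0
      exact h0.symm
    let ψ : N →* Multiplicative ((ℚ ⊗[ℤ] Additive (Abelianization N)) ⧸ K) :=
      MonoidHom.mk' (fun n => Multiplicative.ofAdd
        (π ((1:ℚ) ⊗ₜ[ℤ] Additive.ofMul (Abelianization.of n))))
        (by
          intro a b
          rw [← ofAdd_add]
          rw [← map_add, ← TensorProduct.tmul_add]
          congr 1)
    have hψconj : ∀ (g₀ : G) (n : N) (hm : g₀⁻¹ * ↑n * g₀ ∈ N),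
        ψ ⟨g₀⁻¹ * ↑n * g₀, hm⟩ = ψ n := fun g₀ n hm =>
      congrArg Multiplicative.ofAdd (hπconj g₀ n hm)
    have htr : ∀ n : N, MonoidHom.transfer ψ (n : G) = ψ n ^ N.index :=
      transfer_coe_eq_pow_index N ψ hψconj
    let h : Additive (Abelianization G) →+ (ℚ ⊗[ℤ] Additive (Abelianization N)) ⧸ K :=
      AddMonoidHom.mk' (fun a => Multiplicative.toAdd
        (Abelianization.lift (MonoidHom.transfer ψ) (Additive.toMul a)))
        (by intro a b; simp only [toMul_add, map_mul, toAdd_mul])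
    let T := h.toIntLinearMap.liftBaseChange ℚ
    have hTφ : ∀ v, T (φ v) = (N.index : ℚ) • π v := by
      intro v
      induction v using TensorProduct.induction_on with
      | zero => rw [map_zero, map_zero, map_zero, smul_zero]
      | add x y hx hy => rw [map_add, map_add, hx, hy, map_add, smul_add]
      | tmul q a =>
        obtain ⟨n, rfl⟩ : ∃ n : N, Additive.ofMul (Abelianization.of n) = a := by
          obtain ⟨n, hg⟩ := QuotientGroup.mk_surjective (Additive.toMul a)
          exact ⟨n, by rw [show Abelianization.of n = Additive.toMul a from hg]; rfl⟩
        have h1 : h.toIntLinearMap (Additive.ofMul (Abelianization.of ((n : G))))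
            = N.index • π ((1:ℚ) ⊗ₜ[ℤ] Additive.ofMul (Abelianization.of n)) := by
          show Multiplicative.toAdd
              (Abelianization.lift (MonoidHom.transfer ψ) (Abelianization.of (n : G))) = _
          rw [Abelianization.lift_apply_of, htr n, toAdd_pow]
          rfl
        have hq : q ⊗ₜ[ℤ] Additive.ofMul (Abelianization.of n)
            = q • ((1:ℚ) ⊗ₜ[ℤ] Additive.ofMul (Abelianization.of n)) := by
          rw [TensorProduct.smul_tmul', smul_eq_mul, mul_one]
        rw [hφtmul, LinearMap.liftBaseChange_tmul, h1, hq, map_smul,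
          Nat.cast_smul_eq_nsmul ℚ N.index, smul_comm]
    apply le_antisymm
    · intro x hx
      have h0 : (N.index : ℚ) • π x = 0 := by
        rw [← hTφ, LinearMap.mem_ker.mp hx, map_zero]
      have : π x = 0 := (smul_eq_zero.mp h0).resolve_left hm0
      rw [hπ, Submodule.mkQ_apply, Submodule.Quotient.mk_eq_zero] at this
      exact this
    · rw [Submodule.span_le]
      rintro x ⟨g, n, rfl⟩
      have : φ ((1:ℚ) ⊗ₜ[ℤ] (Additive.ofMul (Abelianization.of n) -
          Additive.ofMul (Abelianization.of
            (⟨g * (n : G) * g⁻¹, hN.conj_mem (n : G) n.2 g⟩ : N)))) = 0 := by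
        rw [TensorProduct.tmul_sub, map_sub, hφtmul, hφtmul]
        have : Abelianization.of (((⟨g * (n : G) * g⁻¹, hN.conj_mem (n : G) n.2 g⟩ : N) : G))
            = Abelianization.of ((n : G)) := by
          show Abelianization.of (g * (n : G) * g⁻¹) = _
          rw [map_mul, map_mul, map_inv, mul_comm, ← mul_assoc, inv_mul_cancel, one_mul]
        rw [this, sub_self]
      exact LinearMap.mem_ker.mpr this
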